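/- Let N be a closed normal subgroup of G that is strictly exponentially distorted in G, and let μ̄ denote the pushforward of μ under the quotient homomorphism G → G/N. If the random walk (G/N, μ̄) is cautious with respect to the word length |·|_{G/N} induced by the compact generating set QN of G/N, then the random walk (G, μ) is cautious with respect to |·|_G. -/

import Mathlib

open MeasureTheory Filter Topology
open scoped RealInnerProductSpace ENNReal Pointwise Classical

noncomputable section

variable {G : Type*} [Group G] [TopologicalSpace G] [IsTopologicalGroup G]
  [LocallyCompactSpace G] [MeasurableSpace G] [BorelSpace G]

/-- The word length `|x|_G` associated to the generating set `Q`. -/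
noncomputable def wordLength (Q : Set G) (x : G) : ℕ :=
  if x = 1 then 0 else sInf {n : ℕ | 1 ≤ n ∧ x ∈ Q ^ n}

/-- Convolution of two measures on `G`. -/
noncomputable def mconv (μ ν : MeasureTheory.Measure G) : MeasureTheory.Measure G :=
  (μ.prod ν).map fun p => p.1 * p.2

/-- The `n`-fold convolution power `μ^{*n}`. -/
noncomputable def convPow (μ : MeasureTheory.Measure G) : ℕ → MeasureTheory.Measure G
  | 0 => MeasureTheory.Measure.dirac 1
  | n + 1 => mconv (convPow μ n) μ

/-- The standing assumptions ("Convention") on `G`, `Q`, the Haar measure `m`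
and the probability measure `μ`. -/
structure Convention (Q : Set G) (m μ : MeasureTheory.Measure G) : Prop where
  relCompact : IsCompact (closure Q)
  qsymm : Q⁻¹ = Q
  genNbhd : ∃ U : Set G, IsOpen U ∧ (1 : G) ∈ U ∧ U ⊆ Q ∧ Subgroup.closure U = ⊤
  haar : m.IsHaarMeasure
  prob : IsProbabilityMeasure μ
  msymm : μ.map (fun x => x⁻¹) = μ
  ac : μ.AbsolutelyContinuous m
  lowerBound : ∃ ε : ℝ≥0∞, 0 < ε ∧ ∀ x ∈ Q, ε ≤ μ.rnDeriv m x
  moments : ∀ d : ℕ, ∫⁻ x, (wordLength Q x : ℝ≥0∞) ^ d ∂μ < ⊤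

variable {H : Type*} [NormedAddCommGroup H] [InnerProductSpace ℝ H]

/-- `b : G → H` is a continuous `1`-cocycle for the orthogonal representation `π`. -/
def IsCocycle (π : G →* (H ≃ₗᵢ[ℝ] H)) (b : G → H) : Prop :=
  Continuous b ∧ ∀ g x : G, b (g * x) = b g + π g (b x)

/-- `b` is a `1`-coboundary. -/
def IsCoboundary (π : G →* (H ≃ₗᵢ[ℝ] H)) (b : G → H) : Prop :=
  ∃ v : H, ∀ x : G, b x = v - π x v

/-- The subspace `K` is invariant under the representation `π`. -/
def IsInvariantSub (π : G →* (H ≃ₗᵢ[ℝ] H)) (K : Submodule ℝ H) : Prop :=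
  ∀ g : G, ∀ v ∈ K, π g v ∈ K

/-- `P` is the orthogonal projection of `H` onto `K`. -/
def IsOrthProj (K : Submodule ℝ H) (P : H →ₗ[ℝ] H) : Prop :=
  ∀ v : H, P v ∈ K ∧ v - P v ∈ Kᗮ


/-- The partial product `s₁ ⋯ s_k` of the first `k` coordinates of `s : Fin n → G`. -/
def pprodFin {n : ℕ} (s : Fin n → G) (k : ℕ) : G :=
  (((List.finRange n).take k).map s).prod

/-- The random walk `(G, μ)` is cautious with respect to the length function `len`. -/
def Cautious (μ : MeasureTheory.Measure G) [MeasureTheory.SigmaFinite μ]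
    (len : G → ℝ) : Prop :=
  ∀ c : ℝ, 0 < c → 0 < Filter.limsup (fun n : ℕ =>
    MeasureTheory.Measure.pi (fun _ : Fin n => μ)
      {s : Fin n → G | ∀ k : ℕ, 1 ≤ k → k ≤ n → len (pprodFin s k) < c * Real.sqrt n})
    Filter.atTop

/-- The word length on the quotient `G/N` induced by the compact generating set `QN`,
viewed as a function on `G`. -/
noncomputable def qWordLength (Q : Set G) (N : Subgroup G) (g : G) : ℕ :=
  if g ∈ N then 0 else sInf {k : ℕ | 1 ≤ k ∧ g ∈ Q ^ k * (N : Set G)}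



section WL

variable {P : Set G}

lemma gen_of (hsym : P⁻¹ = P) (U : Set G) (h1U : (1 : G) ∈ U) (hUP : U ⊆ P)
    (hgen : Subgroup.closure U = ⊤) :
    ∀ x : G, ∃ n, 1 ≤ n ∧ x ∈ P ^ n := by
  intro x
  have hx : x ∈ Subgroup.closure U := by rw [hgen]; exact Subgroup.mem_top x
  induction hx using Subgroup.closure_induction with
  | mem x hxU => exact ⟨1, le_refl 1, by simpa using hUP hxU⟩
  | one => exact ⟨1, le_refl 1, by simpa using hUP h1U⟩
  | mul x y _ _ hx hy =>
    obtain ⟨a, ha1, ha⟩ := hx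
    obtain ⟨b, hb1, hb⟩ := hy
    exact ⟨a + b, le_trans ha1 (Nat.le_add_right a b), by rw [pow_add]; exact Set.mul_mem_mul ha hb⟩
  | inv x _ hx =>
    obtain ⟨a, ha1, ha⟩ := hx
    refine ⟨a, ha1, ?_⟩
    rw [← hsym, inv_pow]
    exact Set.inv_mem_inv.mpr ha

lemma wordLength_one : wordLength P (1 : G) = 0 := if_pos rfl

lemma mem_pow_wordLength (gen : ∀ x : G, ∃ n, 1 ≤ n ∧ x ∈ P ^ n) {x : G} (hx : x ≠ 1) :
    1 ≤ wordLength P x ∧ x ∈ P ^ wordLength P x := by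
  have : wordLength P x = sInf {n : ℕ | 1 ≤ n ∧ x ∈ P ^ n} := if_neg hx
  rw [this]
  exact Nat.sInf_mem (gen x)

lemma wordLength_le {x : G} {n : ℕ} (hn : 1 ≤ n) (hx : x ∈ P ^ n) : wordLength P x ≤ n := by
  unfold wordLength
  split
  · exact Nat.zero_le n
  · exact Nat.sInf_le ⟨hn, hx⟩

lemma wordLength_mul_le (gen : ∀ x : G, ∃ n, 1 ≤ n ∧ x ∈ P ^ n) (x y : G) :
    wordLength P (x * y) ≤ wordLength P x + wordLength P y := by
  by_cases hx : x = 1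
  · simp [hx, wordLength_one]
  by_cases hy : y = 1
  · simp [hy, wordLength_one]
  obtain ⟨ha1, ha⟩ := mem_pow_wordLength gen hx
  obtain ⟨hb1, hb⟩ := mem_pow_wordLength gen hy
  exact wordLength_le (le_trans ha1 (Nat.le_add_right _ _))
    (by rw [pow_add]; exact Set.mul_mem_mul ha hb)

lemma wordLength_inv_le (gen : ∀ x : G, ∃ n, 1 ≤ n ∧ x ∈ P ^ n) (hsym : P⁻¹ = P) (x : G) :
    wordLength P x⁻¹ ≤ wordLength P x := by
  by_cases hx : x = 1
  · simp [hx, wordLength_one]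
  obtain ⟨ha1, ha⟩ := mem_pow_wordLength gen hx
  refine wordLength_le ha1 ?_
  have h2 : x⁻¹ ∈ (P ^ wordLength P x)⁻¹ := Set.inv_mem_inv.mpr ha
  rwa [← inv_pow, hsym] at h2

lemma wordLength_mono {Q : Set G} (gen : ∀ x : G, ∃ n, 1 ≤ n ∧ x ∈ P ^ n) (hPQ : P ⊆ Q) (x : G) :
    wordLength Q x ≤ wordLength P x := by
  by_cases hx : x = 1
  · simp [hx, wordLength_one]
  obtain ⟨ha1, ha⟩ := mem_pow_wordLength gen hx
  exact wordLength_le ha1 (Set.pow_subset_pow_left hPQ ha)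

end WL

lemma pprodFin_zero {n : ℕ} (s : Fin n → G) : pprodFin s 0 = 1 := by
  simp [pprodFin]

lemma pprodFin_succ {n : ℕ} (s : Fin n → G) {k : ℕ} (hk : k < n) :
    pprodFin s (k + 1) = pprodFin s k * s ⟨k, hk⟩ := by
  unfold pprodFin
  rw [List.take_succ]
  have h1 : (List.finRange n)[k]? = some ⟨k, hk⟩ := by
    rw [List.getElem?_eq_getElem (by simpa using hk)]
    simp
  rw [h1]
  simp

lemma det_bound {Q : Set G} (genQ : ∀ x : G, ∃ n, 1 ≤ n ∧ x ∈ Q ^ n) (hsymm : Q⁻¹ = Q)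
    (N : Subgroup G) (hNnormal : N.Normal)
    (lenN : N → ℝ) (hnnN : ∀ h : N, 0 ≤ lenN h) (h1N : lenN 1 = 0)
    (hsubN : ∀ h h' : N, lenN (h * h') ≤ lenN h + lenN h')
    (C : ℝ) (hC : 1 ≤ C)
    (hdistort : ∀ h : N,
        (1 / C) * Real.log (lenN h + 1) - C ≤ (wordLength Q (h : G) : ℝ) ∧
        (wordLength Q (h : G) : ℝ) ≤ C * Real.log (lenN h + 1) + C)
    {n : ℕ} (s : Fin n → G) (b : ℝ) (hb : 0 < b)
    (hA : ∀ k : ℕ, 1 ≤ k → k ≤ n → (qWordLength Q N (pprodFin s k) : ℝ) < b)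
    (hB : ∀ i : Fin n, (wordLength Q (s i) : ℝ) ≤ b) :
    ∀ k : ℕ, 1 ≤ k → k ≤ n → (wordLength Q (pprodFin s k) : ℝ)
      ≤ (3 * C ^ 2 + 1) * b + C * Real.log (n + 1) + C ^ 3 + C := by
  have hC0 : (0 : ℝ) < C := lt_of_lt_of_le one_pos hC
  -- choose the u k
  have hex : ∀ k : ℕ, ∃ u : G, (k = 0 → u = 1) ∧
      (k ≤ n → (wordLength Q u : ℝ) ≤ b ∧ u⁻¹ * pprodFin s k ∈ N) := by
    intro k
    rcases Nat.eq_zero_or_pos k with hk0 | hk1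
    · refine ⟨1, fun _ => rfl, fun _ => ⟨by simp [wordLength_one]; positivity, ?_⟩⟩
      subst hk0; simp [pprodFin_zero]
    by_cases hkn : k ≤ n
    · set w := pprodFin s k with hw
      by_cases hwN : w ∈ N
      · exact ⟨1, fun _ => rfl, fun _ => ⟨by simp [wordLength_one]; positivity,
          by simpa using hwN⟩⟩
      · have hq := hA k hk1 hkn
        have hqw : qWordLength Q N w = sInf {j : ℕ | 1 ≤ j ∧ w ∈ Q ^ j * (N : Set G)} :=
          if_neg hwN
        have hne : ∃ j, 1 ≤ j ∧ w ∈ Q ^ j * (N : Set G) := by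
          obtain ⟨m, hm1, hm⟩ := genQ w
          exact ⟨m, hm1, ⟨w, hm, 1, N.one_mem, mul_one w⟩⟩
        have hmem := Nat.sInf_mem hne
        obtain ⟨hj1, hjw⟩ := hmem
        obtain ⟨u, hu, h, hh, huh⟩ := hjw
        refine ⟨u, fun h0 => absurd (h0 ▸ hk1) (by simp), fun _ => ⟨?_, ?_⟩⟩
        · have h1 : wordLength Q u ≤ sInf {j : ℕ | 1 ≤ j ∧ w ∈ Q ^ j * (N : Set G)} :=
            wordLength_le hj1 hu
          have h2 : (wordLength Q u : ℝ) ≤ (qWordLength Q N w : ℝ) := by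
            rw [hqw]; exact_mod_cast h1
          exact h2.trans hq.le
        · have : u⁻¹ * w = h := by rw [← huh]; group
          rw [this]; exact hh
    · exact ⟨1, fun _ => rfl, fun h => absurd h hkn⟩
  choose u hu0 hu using hex
  -- membership of the N-parts
  have memN : ∀ k : ℕ, k ≤ n → pprodFin s k * (u k)⁻¹ ∈ N := by
    intro k hk
    have h1 := (hu k hk).2
    have h2 := hNnormal.conj_mem _ h1 (pprodFin s k)
    have h3 : pprodFin s k * ((u k)⁻¹ * pprodFin s k) * (pprodFin s k)⁻¹
        = pprodFin s k * (u k)⁻¹ := by group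
    rwa [h3] at h2
  set E : ℝ := Real.exp (C * (3 * b + C)) with hE
  have hE1 : (1 : ℝ) ≤ E := Real.one_le_exp (by positivity)
  -- the inductive length bound
  have key : ∀ k : ℕ, ∀ hk : k ≤ n, lenN ⟨pprodFin s k * (u k)⁻¹, memN k hk⟩ ≤ k * E := by
    intro k
    induction k with
    | zero =>
      intro hk
      have hx : (⟨pprodFin s 0 * (u 0)⁻¹, memN 0 hk⟩ : N) = 1 := by
        ext; simp [pprodFin_zero, hu0 0 rfl]
      rw [hx, h1N]; simp
    | succ k ih =>
      intro hk
      have hkle : k ≤ n := Nat.le_of_succ_le hk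
      have hkn : k < n := hk
      set sk := s ⟨k, hkn⟩ with hsk
      have hps := pprodFin_succ s hkn
      have hγ : (pprodFin s k * (u k)⁻¹)⁻¹ * (pprodFin s (k+1) * (u (k+1))⁻¹)
          = u k * sk * (u (k+1))⁻¹ := by rw [hps, hsk]; group
      have hγN : u k * sk * (u (k+1))⁻¹ ∈ N := by
        rw [← hγ]; exact N.mul_mem (N.inv_mem (memN k hkle)) (memN (k+1) hk)
      have hsplit : (⟨pprodFin s (k+1) * (u (k+1))⁻¹, memN (k+1) hk⟩ : N)
          = ⟨pprodFin s k * (u k)⁻¹, memN k hkle⟩ * ⟨u k * sk * (u (k+1))⁻¹, hγN⟩ := by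
        ext
        simp only [Subgroup.coe_mul]
        rw [hps, hsk]; group
      -- word length bound on γ
      have hwγ : (wordLength Q (u k * sk * (u (k+1))⁻¹) : ℝ) ≤ 3 * b := by
        have t1 := wordLength_mul_le genQ (u k * sk) (u (k+1))⁻¹
        have t2 := wordLength_mul_le genQ (u k) sk
        have t3 := wordLength_inv_le genQ hsymm (u (k+1))
        have b1 := (hu k hkle).1
        have b2 := (hu (k+1) hk).1
        have b3 := hB ⟨k, hkn⟩
        have c1 : (wordLength Q (u k * sk * (u (k+1))⁻¹) : ℝ)
            ≤ (wordLength Q (u k) : ℝ) + (wordLength Q sk : ℝ)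
              + (wordLength Q ((u (k+1))⁻¹) : ℝ) := by
          push_cast
          have := le_trans t1 (add_le_add_left t2 _)
          exact_mod_cast this
        have c2 : (wordLength Q ((u (k+1))⁻¹) : ℝ) ≤ (wordLength Q (u (k+1)) : ℝ) := by
          exact_mod_cast t3
        calc (wordLength Q (u k * sk * (u (k+1))⁻¹) : ℝ) ≤ _ := c1
          _ ≤ b + b + b := by
              refine add_le_add (add_le_add b1 ?_) (c2.trans b2)
              exact b3
          _ = 3 * b := by ring
      -- lenN bound on γ
      have hlenγ : lenN ⟨u k * sk * (u (k+1))⁻¹, hγN⟩ ≤ E - 1 := by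
        set γ : N := ⟨u k * sk * (u (k+1))⁻¹, hγN⟩
        have hd := (hdistort γ).1
        have hpos : (0 : ℝ) < lenN γ + 1 := by have := hnnN γ; linarith
        have hlog : Real.log (lenN γ + 1) ≤ C * (3 * b + C) := by
          have h2 := mul_le_mul_of_nonneg_left (hd.trans hwγ) hC0.le
          have hCne : C ≠ 0 := ne_of_gt hC0
          have h5 : C * (1 / C * Real.log (lenN γ + 1) - C)
              = Real.log (lenN γ + 1) - C * C := by field_simp
          rw [h5] at h2
          nlinarith [h2]
        have := (Real.log_le_iff_le_exp hpos).mp hlog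
        rw [hE]; linarith
      have hsum := hsubN ⟨pprodFin s k * (u k)⁻¹, memN k hkle⟩ ⟨u k * sk * (u (k+1))⁻¹, hγN⟩
      rw [hsplit]
      have ihk := ih hkle
      push_cast
      calc lenN _ ≤ _ := hsum
        _ ≤ k * E + (E - 1) := add_le_add ihk hlenγ
        _ ≤ (k + 1) * E := by ring_nf; linarith
  -- conclusion
  intro k hk1 hkn
  set g : N := ⟨pprodFin s k * (u k)⁻¹, memN k hkn⟩ with hg
  have hlen : lenN g ≤ n * E := by
    have := key k hkn
    have hkE : (k : ℝ) * E ≤ n * E := by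
      have : (k : ℝ) ≤ n := by exact_mod_cast hkn
      nlinarith
    exact le_trans this hkE
  have hwd := (hdistort g).2
  have hpos : (0 : ℝ) < lenN g + 1 := by have := hnnN g; linarith
  have hEpos : (0 : ℝ) < E := lt_of_lt_of_le one_pos hE1
  have hlog : Real.log (lenN g + 1) ≤ Real.log (n + 1) + C * (3 * b + C) := by
    have h1 : lenN g + 1 ≤ (n + 1) * E := by
      have : (n : ℝ) * E + 1 ≤ (n + 1) * E := by nlinarith
      linarith
    have h2 := Real.log_le_log hpos h1
    rwa [Real.log_mul (by positivity) (by positivity), Real.log_exp] at h2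
  -- split pprodFin s k = g * u k
  have hsplit : pprodFin s k = (g : G) * u k := by rw [hg]; group
  have hmul := wordLength_mul_le genQ (g : G) (u k)
  have hcast : (wordLength Q (pprodFin s k) : ℝ)
      ≤ (wordLength Q (g : G) : ℝ) + (wordLength Q (u k) : ℝ) := by
    rw [hsplit]; exact_mod_cast hmul
  have hub := (hu k hkn).1
  have : (wordLength Q (g : G) : ℝ) ≤ C * (Real.log (n+1) + C * (3*b+C)) + C := by
    refine hwd.trans ?_
    have := mul_le_mul_of_nonneg_left hlog hC0.le
    linarith
  calc (wordLength Q (pprodFin s k) : ℝ) ≤ _ := hcast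
    _ ≤ (C * (Real.log (n+1) + C * (3*b+C)) + C) + b := add_le_add this hub
    _ ≤ (3 * C ^ 2 + 1) * b + C * Real.log (n + 1) + C ^ 3 + C := by ring_nf; nlinarith


/-- The union `W ∪ W^2 ∪ ⋯ ∪ W^j`. -/
def Tset (W : Set G) (j : ℕ) : Set G := ⋃ k ∈ Set.Icc 1 j, W ^ k

lemma mem_Tset_of {W : Set G} {x : G} {k j : ℕ} (hk1 : 1 ≤ k) (hkj : k ≤ j)
    (hx : x ∈ W ^ k) : x ∈ Tset W j :=
  Set.mem_biUnion ⟨hk1, hkj⟩ hx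

lemma Tset_mono {W : Set G} {i j : ℕ} (hij : i ≤ j) : Tset W i ⊆ Tset W j := by
  intro x hx
  obtain ⟨k, hk, hxk⟩ := Set.mem_iUnion₂.mp hx
  exact mem_Tset_of hk.1 (hk.2.trans hij) hxk

lemma wordLength_le_of_mem_Tset {W Q : Set G} (hWQ : W ⊆ Q) {x : G} {j : ℕ}
    (hx : x ∈ Tset W j) : wordLength Q x ≤ j := by
  obtain ⟨k, hk, hxk⟩ := Set.mem_iUnion₂.mp hx
  exact le_trans (wordLength_le hk.1 (Set.pow_subset_pow_left hWQ hxk)) hk.2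

lemma Tset_chain {W Q : Set G} {m : ℕ} (hQT : Q ⊆ Tset W m) :
    ∀ k : ℕ, ∀ x ∈ Q ^ k, x = 1 ∨ ∃ r, 1 ≤ r ∧ r ≤ m * k ∧ x ∈ W ^ r := by
  intro k
  induction k with
  | zero => intro x hx; left; simpa using hx
  | succ k ih =>
    intro x hx
    rw [pow_succ] at hx
    obtain ⟨y, hy, z, hz, rfl⟩ := hx
    obtain ⟨r', hr', hxr'⟩ := Set.mem_iUnion₂.mp (hQT hz)
    rcases ih y hy with rfl | ⟨r, hr1, hrm, hyr⟩
    · right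
      exact ⟨r', hr'.1, le_trans hr'.2 (Nat.le_mul_of_pos_right m (Nat.succ_pos k)), by
        simpa using hxr'⟩
    · right
      refine ⟨r + r', le_trans hr1 (Nat.le_add_right _ _), ?_, ?_⟩
      · have h1 : r + r' ≤ m * k + m := Nat.add_le_add hrm hr'.2
        have h2 : m * k + m = m * (k + 1) := (Nat.mul_succ m k).symm
        omega
      · rw [pow_add]; exact Set.mul_mem_mul hyr hxr'

lemma Tset_lower {W Q : Set G} {m : ℕ} (genQ : ∀ x : G, ∃ n, 1 ≤ n ∧ x ∈ Q ^ n)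
    (hW1 : (1 : G) ∈ W) (hQT : Q ⊆ Tset W m) {j : ℕ} (hj : 1 ≤ j) {x : G}
    (hx : x ∉ Tset W j) : j + 1 ≤ m * wordLength Q x := by
  by_contra hcon
  push_neg at hcon
  have hmwl : m * wordLength Q x ≤ j := by omega
  have hx1 : x ≠ 1 := by
    rintro rfl
    exact hx (mem_Tset_of le_rfl hj (by simpa using hW1))
  obtain ⟨hwl1, hmem⟩ := mem_pow_wordLength genQ hx1
  rcases Tset_chain hQT (wordLength Q x) x hmem with rfl | ⟨r, hr1, hrm, hxr⟩
  · exact hx1 rfl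
  · exact hx (mem_Tset_of hr1 (hrm.trans hmwl) hxr)


lemma isOpen_Tset {W : Set G} (hW : IsOpen W) (j : ℕ) : IsOpen (Tset W j) := by
  refine isOpen_biUnion fun k hk => ?_
  obtain ⟨k', rfl⟩ : ∃ k', k = k' + 1 := ⟨k - 1, (Nat.succ_pred_eq_of_pos hk.1).symm⟩
  rw [pow_succ]
  exact hW.mul_left

lemma markov_aux {α : Type*} [MeasurableSpace α] (μ : Measure α) {S : Set α}
    (hS : MeasurableSet S) (f : α → ℝ≥0∞) (c : ℝ≥0∞) (hf : ∀ x ∈ S, c ≤ f x) :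
    c * μ S ≤ ∫⁻ x, f x ∂μ := by
  have h1 : c * μ S = ∫⁻ x, S.indicator (fun _ => c) x ∂μ := by
    rw [lintegral_indicator hS, setLIntegral_const]
  rw [h1]
  refine lintegral_mono fun x => ?_
  by_cases hx : x ∈ S
  · simpa [Set.indicator_of_mem hx] using hf x hx
  · simp [Set.indicator_of_notMem hx]

lemma pi_eval_measure {n : ℕ} (μ : Measure G) [IsProbabilityMeasure μ] (S : Set G) (i : Fin n) :
    Measure.pi (fun _ : Fin n => μ) ((fun s : Fin n → G => s i) ⁻¹' S) = μ S := by
  have h : (fun s : Fin n → G => s i) = Function.eval i := rfl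
  rw [h, Set.eval_preimage, Measure.pi_pi]
  rw [Finset.prod_eq_single i (fun j _ hji => by
    rw [Function.update_of_ne hji]; exact measure_univ)
    (fun h => absurd (Finset.mem_univ i) h)]
  rw [Function.update_self]

lemma ennreal_step (a : ℝ≥0∞) (n : ℕ) (hn : 1 ≤ n) :
    (n : ℝ≥0∞) * (a / (n : ℝ≥0∞) ^ 2) ≤ a / n := by
  have hn0 : (n : ℝ≥0∞) ≠ 0 := Nat.cast_ne_zero.mpr (by omega)
  have hnt : (n : ℝ≥0∞) ≠ ⊤ := ENNReal.natCast_ne_top n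
  have h1 : (n : ℝ≥0∞) / (n : ℝ≥0∞) ^ 2 = 1 / n := by
    rw [pow_two]
    have := ENNReal.mul_div_mul_left (1 : ℝ≥0∞) (n : ℝ≥0∞) hn0 hnt
    simpa [mul_one] using this
  have h2 : (n : ℝ≥0∞) * (a / (n : ℝ≥0∞) ^ 2) = a * ((n : ℝ≥0∞) / (n : ℝ≥0∞) ^ 2) := by
    rw [div_eq_mul_inv, div_eq_mul_inv]; ring
  rw [h2, h1, mul_one_div]

lemma ev_sqrt (c₁ : ℝ) (hc : 0 < c₁) (A : ℝ) :
    ∀ᶠ n : ℕ in atTop, A ≤ c₁ * Real.sqrt n := by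
  obtain ⟨M, hM⟩ := exists_nat_ge ((A / c₁) ^ 2)
  filter_upwards [eventually_ge_atTop M] with n hn
  have h1 : Real.sqrt ((A / c₁) ^ 2) ≤ Real.sqrt n := by
    apply Real.sqrt_le_sqrt
    exact hM.trans (by exact_mod_cast hn)
  rw [Real.sqrt_sq_eq_abs] at h1
  have h2 : A / c₁ ≤ Real.sqrt n := (le_abs_self _).trans h1
  calc A = c₁ * (A / c₁) := by field_simp
    _ ≤ c₁ * Real.sqrt n := by nlinarith

lemma ev_lin (d : ℝ) (hd : 0 < d) (A : ℝ) : ∀ᶠ n : ℕ in atTop, A ≤ d * n := by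
  obtain ⟨M, hM⟩ := exists_nat_ge (A / d)
  filter_upwards [eventually_ge_atTop M] with n hn
  have h2 : A / d ≤ (n : ℝ) := hM.trans (by exact_mod_cast hn)
  calc A = d * (A / d) := by field_simp
    _ ≤ d * n := by nlinarith


set_option maxHeartbeats 1000000 in
/-- If `N ◁ G` is closed and strictly exponentially distorted and the
quotient walk `(G/N, μ̄)` is cautious, then `(G, μ)` is cautious. -/
theorem stmt_12 (Q : Set G) (m μ : MeasureTheory.Measure G) (hconv : Convention Q m μ)
    [MeasureTheory.IsProbabilityMeasure μ]
    (N : Subgroup G) (hNnormal : N.Normal) (hNclosed : IsClosed (N : Set G))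
    (lenN : N → ℝ) (hnnN : ∀ h : N, 0 ≤ lenN h) (h1N : lenN 1 = 0)
    (hinvN : ∀ h : N, lenN h⁻¹ = lenN h)
    (hsubN : ∀ h h' : N, lenN (h * h') ≤ lenN h + lenN h')
    (C : ℝ) (hC : 1 ≤ C)
    (hdistort : ∀ h : N,
        (1 / C) * Real.log (lenN h + 1) - C ≤ (wordLength Q (h : G) : ℝ) ∧
        (wordLength Q (h : G) : ℝ) ≤ C * Real.log (lenN h + 1) + C)
    (hquot : Cautious μ fun g => (qWordLength Q N g : ℝ)) :
    Cautious μ fun g => (wordLength Q g : ℝ) := by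
  intro c hc
  have hC0 : (0 : ℝ) < C := lt_of_lt_of_le one_pos hC
  obtain ⟨U, hUopen, hU1, hUQ, hUgen⟩ := hconv.genNbhd
  set W : Set G := U ∪ U⁻¹ with hW
  have hWsym : W⁻¹ = W := by
    rw [hW, Set.union_inv, inv_inv, Set.union_comm]
  have hWQ : W ⊆ Q := by
    refine Set.union_subset hUQ ?_
    intro x hx
    rw [← hconv.qsymm]
    exact Set.inv_subset_inv.mpr hUQ hx
  have hW1 : (1 : G) ∈ W := Or.inl hU1
  have hWopen : IsOpen W := hUopen.union hUopen.inv
  have genQ : ∀ x : G, ∃ n, 1 ≤ n ∧ x ∈ Q ^ n := gen_of hconv.qsymm U hU1 hUQ hUgen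
  have genW : ∀ x : G, ∃ n, 1 ≤ n ∧ x ∈ W ^ n :=
    gen_of hWsym U hU1 Set.subset_union_left hUgen
  -- compactness: Q is contained in some Tset W m₀
  obtain ⟨m₀, hm₀1, hQT⟩ : ∃ m₀ : ℕ, 1 ≤ m₀ ∧ Q ⊆ Tset W m₀ := by
    have hcover : closure Q ⊆ ⋃ j : ℕ, Tset W j := by
      intro x _
      obtain ⟨k, hk1, hk⟩ := genW x
      exact Set.mem_iUnion.mpr ⟨k, mem_Tset_of hk1 le_rfl hk⟩
    obtain ⟨t, ht⟩ := hconv.relCompact.elim_finite_subcover (fun j => Tset W j)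
      (fun j => isOpen_Tset hWopen j) hcover
    refine ⟨max (t.sup id) 1, le_max_right _ _, ?_⟩
    intro x hx
    have hx2 := ht (subset_closure hx)
    obtain ⟨j, hjt, hxj⟩ := Set.mem_iUnion₂.mp hx2
    exact Tset_mono (le_trans (Finset.le_sup hjt) (le_max_left _ _)) hxj
  -- the sixth-moment constant
  set K : ℝ≥0∞ := ∫⁻ x, ((m₀ : ℝ≥0∞) * (wordLength Q x : ℝ≥0∞)) ^ 6 ∂μ with hK
  have hKfin : K < ⊤ := by
    have heq : K = (m₀ : ℝ≥0∞) ^ 6 * ∫⁻ x, (wordLength Q x : ℝ≥0∞) ^ 6 ∂μ := by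
      rw [hK, ← lintegral_const_mul' _ _ (ENNReal.pow_ne_top (ENNReal.natCast_ne_top m₀))]
      congr 1
      funext x
      rw [mul_pow]
    rw [heq]
    exact ENNReal.mul_lt_top (ENNReal.pow_ne_top (ENNReal.natCast_ne_top m₀)).lt_top
      (hconv.moments 6)
  -- Markov inequality for the complements of the Tsets
  have markov : ∀ j : ℕ, 1 ≤ j → ((j : ℝ≥0∞)) ^ 6 * μ (Tset W j)ᶜ ≤ K := by
    intro j hj
    have hmeas : MeasurableSet (Tset W j)ᶜ := (isOpen_Tset hWopen j).measurableSet.compl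
    refine markov_aux μ hmeas _ _ ?_
    intro x hx
    have hlow := Tset_lower genQ hW1 hQT hj hx
    have hle : (j : ℝ≥0∞) ≤ (m₀ : ℝ≥0∞) * (wordLength Q x : ℝ≥0∞) := by
      have : (j : ℕ) ≤ m₀ * wordLength Q x := by omega
      exact_mod_cast Nat.cast_le.mpr this
    exact pow_le_pow_left₀ zero_le hle 6
  -- parameters
  set c₁ : ℝ := c / (2 * (3 * C ^ 2 + 1)) with hc₁def
  have hc₁ : 0 < c₁ := by rw [hc₁def]; positivity
  have hc₁c : (3 * C ^ 2 + 1) * c₁ = c / 2 := by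
    rw [hc₁def]; field_simp
  -- threshold
  set t : ℕ → ℕ := fun n => Nat.floor (c₁ * Real.sqrt n) with ht
  -- events
  set A : ∀ n : ℕ, Set (Fin n → G) := fun n =>
    {s : Fin n → G | ∀ k : ℕ, 1 ≤ k → k ≤ n →
      (qWordLength Q N (pprodFin s k) : ℝ) < c₁ * Real.sqrt n} with hA
  set B : ∀ n : ℕ, Set (Fin n → G) := fun n =>
    {s : Fin n → G | ∀ i : Fin n, s i ∈ Tset W (t n)} with hB
  set P : ∀ n : ℕ, Measure (Fin n → G) := fun n => Measure.pi (fun _ : Fin n => μ) with hP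
  -- bound on the measure of Bᶜ
  have hBc : ∀ n : ℕ, P n (B n)ᶜ ≤ n * μ (Tset W (t n))ᶜ := by
    intro n
    have hset : (B n)ᶜ = ⋃ i : Fin n, (fun s : Fin n → G => s i) ⁻¹' (Tset W (t n))ᶜ := by
      ext s
      simp [hB, not_forall]
    rw [hset]
    refine le_trans (measure_iUnion_le _) ?_
    have heach : ∀ i : Fin n,
        P n ((fun s : Fin n → G => s i) ⁻¹' (Tset W (t n))ᶜ) = μ (Tset W (t n))ᶜ := by
      intro i
      exact pi_eval_measure μ _ i
    calc (∑' i : Fin n, P n ((fun s : Fin n → G => s i) ⁻¹' (Tset W (t n))ᶜ))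
        = ∑' _ : Fin n, μ (Tset W (t n))ᶜ := by
          congr 1; funext i; exact heach i
      _ = n * μ (Tset W (t n))ᶜ := by
          rw [tsum_fintype]
          simp [Finset.sum_const, nsmul_eq_mul]
      _ ≤ n * μ (Tset W (t n))ᶜ := le_rfl
  -- the tail tends to zero
  have htail : Tendsto (fun n : ℕ => P n (B n)ᶜ) atTop (𝓝 0) := by
    have hev : ∀ᶠ n : ℕ in atTop, P n (B n)ᶜ ≤ K / n := by
      filter_upwards [ev_sqrt c₁ hc₁ 2, ev_lin ((c₁ / 2) ^ 6) (by positivity) 1,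
        eventually_ge_atTop 1] with n h2 hlin hn1
      -- t n ≥ 1 and (n)^2 ≤ (t n)^6
      have htn1 : 1 ≤ t n := by
        rw [ht]
        exact Nat.le_floor (by push_cast; linarith)
      have htlow : c₁ * Real.sqrt n / 2 ≤ (t n : ℝ) := by
        have := Nat.lt_floor_add_one (c₁ * Real.sqrt n)
        rw [ht]
        push_cast
        linarith [this]
      have hn2t6 : (n : ℕ) ^ 2 ≤ (t n) ^ 6 := by
        have h6 : (Real.sqrt n) ^ 6 = ((n : ℝ)) ^ 3 := by
          rw [show (6 : ℕ) = 2 * 3 from rfl, pow_mul, Real.sq_sqrt (Nat.cast_nonneg n)]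
        have ht6 : (c₁ * Real.sqrt n / 2) ^ 6 ≤ ((t n : ℝ)) ^ 6 :=
          pow_le_pow_left₀ (by positivity) htlow 6
        have hs6 : (c₁ * Real.sqrt n / 2) ^ 6 = (c₁ / 2) ^ 6 * ((n : ℝ)) ^ 3 := by
          rw [show (c₁ * Real.sqrt n / 2) ^ 6 = (c₁ / 2) ^ 6 * (Real.sqrt n) ^ 6 by ring, h6]
        have hreal : ((n : ℝ)) ^ 2 ≤ ((t n : ℝ)) ^ 6 := by
          have hn0 : (0 : ℝ) ≤ (n : ℝ) := Nat.cast_nonneg n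
          nlinarith [ht6, hs6, hlin, sq_nonneg ((n : ℝ))]
        exact_mod_cast hreal
      have hμT : μ (Tset W (t n))ᶜ ≤ K / ((t n : ℝ≥0∞)) ^ 6 := by
        rw [ENNReal.le_div_iff_mul_le
          (Or.inl (pow_ne_zero 6 (Nat.cast_ne_zero.mpr (by omega))))
          (Or.inl (ENNReal.pow_ne_top (ENNReal.natCast_ne_top _)))]
        rw [mul_comm]
        exact markov (t n) htn1
      have hdiv : K / ((t n : ℝ≥0∞)) ^ 6 ≤ K / ((n : ℝ≥0∞)) ^ 2 := by
        apply ENNReal.div_le_div_left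
        have : ((n : ℕ) ^ 2 : ℝ≥0∞) ≤ ((t n) ^ 6 : ℝ≥0∞) := by
          exact_mod_cast Nat.cast_le.mpr hn2t6
        push_cast at this
        exact_mod_cast this
      calc P n (B n)ᶜ ≤ n * μ (Tset W (t n))ᶜ := hBc n
        _ ≤ n * (K / ((n : ℝ≥0∞)) ^ 2) :=
            mul_le_mul_right (hμT.trans hdiv) _
        _ ≤ K / n := ennreal_step K n hn1
    have hlim : Tendsto (fun n : ℕ => K / (n : ℝ≥0∞)) atTop (𝓝 0) := by
      have := ENNReal.Tendsto.const_mul (a := K) ENNReal.tendsto_inv_nat_nhds_zero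
        (Or.inr hKfin.ne)
      simpa [div_eq_mul_inv] using this
    exact tendsto_of_tendsto_of_tendsto_of_le_of_le' tendsto_const_nhds hlim
      (Eventually.of_forall fun n => zero_le) hev
  -- the eventual inclusion A n ∩ B n ⊆ target event
  have hincl : ∀ᶠ n : ℕ in atTop, ∀ s : Fin n → G, s ∈ A n ∩ B n →
      ∀ k : ℕ, 1 ≤ k → k ≤ n →
        ((wordLength Q (pprodFin s k) : ℝ)) < c * Real.sqrt n := by
    -- the log term is eventually dominated
    have hloglittle : ∀ᶠ n : ℕ in atTop,
        C * Real.log ((n : ℝ) + 1) + C ^ 3 + C < (c / 2) * Real.sqrt n := by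
      have hε : (0 : ℝ) < c / (16 * (C + 1)) := by positivity
      have hlo := (isLittleO_log_rpow_atTop (r := 1 / 2) (by norm_num)).def hε
      have hcomp : Tendsto (fun n : ℕ => ((n : ℝ) + 1)) atTop atTop :=
        tendsto_atTop_add_const_right _ 1 tendsto_natCast_atTop_atTop
      filter_upwards [hcomp.eventually hlo, eventually_ge_atTop 1,
        ev_sqrt (7 * c / 16) (by positivity) (c / 16 + C ^ 3 + C + C * (c / (16 * (C + 1))) + 1)]
        with n hlog hn1 hbig
      have hn1' : (1 : ℝ) ≤ (n : ℝ) := by exact_mod_cast hn1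
      have hpos : (0 : ℝ) ≤ (n : ℝ) + 1 := by linarith
      rw [Real.norm_eq_abs, Real.norm_eq_abs,
        abs_of_nonneg (Real.log_nonneg (by linarith)),
        abs_of_nonneg (Real.rpow_nonneg hpos _)] at hlog
      rw [← Real.sqrt_eq_rpow] at hlog
      have hsq1 : Real.sqrt ((n : ℝ) + 1) ≤ Real.sqrt n + 1 := by
        have h1 : ((n : ℝ) + 1) ≤ (Real.sqrt n + 1) ^ 2 := by
          have := Real.sq_sqrt (show (0:ℝ) ≤ n by linarith)
          nlinarith [Real.sqrt_nonneg (n : ℝ)]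
        have := Real.sqrt_le_sqrt h1
        rwa [Real.sqrt_sq (by positivity)] at this
      have hlog2 : Real.log ((n : ℝ) + 1) ≤ (c / (16 * (C + 1))) * (Real.sqrt n + 1) := by
        calc Real.log ((n : ℝ) + 1) ≤ (c / (16 * (C + 1))) * Real.sqrt ((n : ℝ) + 1) := hlog
          _ ≤ (c / (16 * (C + 1))) * (Real.sqrt n + 1) := by nlinarith [hε]
      have hCfrac : C * (c / (16 * (C + 1))) ≤ c / 16 := by
        have h1 : C * (c / (16 * (C + 1))) = (C / (C + 1)) * (c / 16) := by
          field_simp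
        have h2 : C / (C + 1) ≤ 1 := by
          rw [div_le_one (by positivity)]; linarith
        rw [h1]
        exact mul_le_of_le_one_left (by positivity) h2
      have h3 : C * Real.log ((n : ℝ) + 1)
          ≤ (c / 16) * Real.sqrt n + C * (c / (16 * (C + 1))) := by
        have := mul_le_mul_of_nonneg_left hlog2 hC0.le
        have hs := Real.sqrt_nonneg (n : ℝ)
        nlinarith [hCfrac]
      have h7 : c / 16 + C ^ 3 + C + C * (c / (16 * (C + 1))) + 1
          ≤ (7 * c / 16) * Real.sqrt n := hbig
      have : (c / 16) * Real.sqrt n + (7 * c / 16) * Real.sqrt n ≤ (c / 2) * Real.sqrt n := by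
        have hs := Real.sqrt_nonneg (n : ℝ)
        nlinarith
      linarith
    filter_upwards [hloglittle, eventually_ge_atTop 1] with n hlogn hn1 s hs k hk1 hkn
    obtain ⟨hsA, hsB⟩ := hs
    have hn1' : (1 : ℝ) ≤ (n : ℝ) := by exact_mod_cast hn1
    have hsqrt1 : (1 : ℝ) ≤ Real.sqrt n := by
      rw [show (1:ℝ) = Real.sqrt 1 by simp]
      exact Real.sqrt_le_sqrt hn1'
    have hbpos : (0 : ℝ) < c₁ * Real.sqrt n := by positivity
    have hBbnd : ∀ i : Fin n, ((wordLength Q (s i) : ℝ)) ≤ c₁ * Real.sqrt n := by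
      intro i
      have hsi := hsB i
      have hwl : wordLength Q (s i) ≤ t n := wordLength_le_of_mem_Tset hWQ hsi
      have hfl : ((t n : ℝ)) ≤ c₁ * Real.sqrt n := Nat.floor_le (by positivity)
      have hwl' : ((wordLength Q (s i) : ℝ)) ≤ (t n : ℝ) := by exact_mod_cast hwl
      linarith
    have hdet := det_bound genQ hconv.qsymm N hNnormal lenN hnnN h1N hsubN C hC hdistort
      s (c₁ * Real.sqrt n) hbpos (fun k hk1 hkn => hsA k hk1 hkn) hBbnd k hk1 hkn
    have hlogcast := hlogn
    have heq : (3 * C ^ 2 + 1) * (c₁ * Real.sqrt n) = (c / 2) * Real.sqrt n := by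
      rw [← mul_assoc, hc₁c]
    calc ((wordLength Q (pprodFin s k) : ℝ))
        ≤ (3 * C ^ 2 + 1) * (c₁ * Real.sqrt n) + C * Real.log ((n : ℕ) + 1) + C ^ 3 + C :=
          hdet
      _ < (c / 2) * Real.sqrt n + (c / 2) * Real.sqrt n := by rw [heq]; linarith
      _ = c * Real.sqrt n := by ring
  -- conclude with the limsup argument
  have hL := hquot c₁ hc₁
  obtain ⟨δ, hδ0, hδL⟩ := exists_between hL
  set δ' : ℝ≥0∞ := min δ 1 with hδ'
  have hδ'0 : 0 < δ' := lt_min hδ0 one_pos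
  have hδ't : δ' ≠ ⊤ := by
    rw [hδ']
    exact ne_top_of_le_ne_top ENNReal.one_ne_top (min_le_right _ _)
  have hfreq : ∃ᶠ n in atTop, δ < P n (A n) := frequently_lt_of_lt_limsup (by isBoundedDefault) hδL
  have hhalf : ∀ᶠ n in atTop, P n (B n)ᶜ < δ' / 2 :=
    htail (Iio_mem_nhds (by simp [ENNReal.div_pos_iff, hδ'0.ne', hδ't]))
  have hcomb := hfreq.and_eventually (hincl.and hhalf)
  have hfinal : ∃ᶠ n in atTop, δ' / 2 ≤ P n
      {s : Fin n → G | ∀ k : ℕ, 1 ≤ k → k ≤ n →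
        ((wordLength Q (pprodFin s k) : ℝ)) < c * Real.sqrt n} := by
    refine hcomb.mono ?_
    rintro n ⟨hδa, hinc, hbn⟩
    have hsub : A n ∩ B n ⊆
        {s : Fin n → G | ∀ k : ℕ, 1 ≤ k → k ≤ n →
          ((wordLength Q (pprodFin s k) : ℝ)) < c * Real.sqrt n} := by
      intro s hsmem
      exact hinc s hsmem
    have h1 : P n (A n) ≤ P n (A n ∩ B n) + P n (B n)ᶜ := by
      refine le_trans (measure_mono ?_) (measure_union_le _ _)
      intro s hsA
      by_cases hsB : s ∈ B n
      · exact Or.inl ⟨hsA, hsB⟩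
      · exact Or.inr hsB
    have h2 : P n (A n) - P n (B n)ᶜ ≤ P n (A n ∩ B n) := tsub_le_iff_right.mpr h1
    have h3 : δ' - δ' / 2 ≤ P n (A n) - P n (B n)ᶜ :=
      tsub_le_tsub (le_trans (min_le_left _ _) hδa.le) hbn.le
    rw [ENNReal.sub_half hδ't] at h3
    exact le_trans h3 (h2.trans (measure_mono hsub))
  have := le_limsup_of_frequently_le hfinal (by isBoundedDefault)
  have hδ'2 : 0 < δ' / 2 := ENNReal.div_pos hδ'0.ne' ENNReal.ofNat_ne_top
  exact lt_of_lt_of_le hδ'2 this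

end
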